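/- Let d > 1 be an integer. Then the sequence of functions λ ↦ d^{-n}·log max{1, |f_λ^n(λ)|} converges locally uniformly on ℂ to a continuous function g_{H∞} : ℂ → ℝ with g_{H∞} ≥ 0 and {λ ∈ ℂ : g_{H∞}(λ) = 0} = C_d, where C_d := {λ ∈ ℂ : sup_n |f_λ^n(λ)| < ∞} is the connectedness locus of the unicritical family. -/

import Mathlib

open Polynomial MeasureTheory Filter

/-- The `n`-th iterate of the unicritical polynomial `f_λ(z) = z^d + λ` (as a polynomial in `z`). -/
noncomputable def uniIter (d : ℕ) (lam : ℂ) : ℕ → Polynomial ℂ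
  | 0 => Polynomial.X
  | n + 1 => (Polynomial.X ^ d + Polynomial.C lam).comp (uniIter d lam n)

open Topology

namespace Stmt17Aux

noncomputable def Z (d : ℕ) (lam : ℂ) (n : ℕ) : ℂ := (uniIter d lam n).eval lam

lemma Z_zero (d : ℕ) (lam : ℂ) : Z d lam 0 = lam := by simp [Z, uniIter]

lemma Z_succ (d : ℕ) (lam : ℂ) (n : ℕ) : Z d lam (n + 1) = (Z d lam n) ^ d + lam := by
  simp [Z, uniIter, Polynomial.eval_comp]

noncomputable def H (d : ℕ) (lam : ℂ) (n : ℕ) : ℝ :=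
  Real.log (max 1 (‖Z d lam n‖))

noncomputable def G (d : ℕ) (lam : ℂ) (n : ℕ) : ℝ := H d lam n / (d : ℝ) ^ n

lemma H_nonneg (d : ℕ) (lam : ℂ) (n : ℕ) : 0 ≤ H d lam n :=
  Real.log_nonneg (le_max_left _ _)

lemma logplus_le {a b c : ℝ} (hc : 0 ≤ c) (h : a ≤ b + c) :
    Real.log (max 1 a) ≤ Real.log (max 1 b) + Real.log (1 + c) := by
  have hb1 : (1 : ℝ) ≤ max 1 b := le_max_left _ _
  have hbb : b ≤ max 1 b := le_max_right _ _
  have h1 : max 1 a ≤ max 1 b * (1 + c) := by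
    apply max_le
    · nlinarith
    · nlinarith
  calc Real.log (max 1 a) ≤ Real.log (max 1 b * (1 + c)) :=
        Real.log_le_log (by positivity) h1
    _ = Real.log (max 1 b) + Real.log (1 + c) :=
        Real.log_mul (by positivity) (by positivity)

lemma max_one_pow {x : ℝ} (hx : 0 ≤ x) (d : ℕ) : (max 1 x) ^ d = max 1 (x ^ d) := by
  rcases le_total x 1 with h | h
  · rw [max_eq_left h, one_pow, max_eq_left (pow_le_one₀ hx h)]
  · rw [max_eq_right h, max_eq_right (one_le_pow₀ h)]


lemma abs_H_step (d : ℕ) (lam : ℂ) (n : ℕ) :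
    |H d lam (n + 1) - (d : ℝ) * H d lam n| ≤ Real.log (1 + ‖lam‖) := by
  set z := Z d lam n with hz
  set a := ‖Z d lam (n + 1)‖ with ha
  set b := (‖z‖) ^ d with hb
  set c := ‖lam‖ with hc
  have hc0 : 0 ≤ c := norm_nonneg _
  have hkey : (d : ℝ) * H d lam n = Real.log (max 1 b) := by
    rw [H, ← Real.log_pow, max_one_pow (norm_nonneg z)]
  have hab : a ≤ b + c := by
    rw [ha, Z_succ]
    calc ‖z ^ d + lam‖ ≤ ‖z ^ d‖ + ‖lam‖ :=
          norm_add_le _ _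
      _ = b + c := by rw [norm_pow]
  have hba : b ≤ a + c := by
    have h0 := norm_sub_le (z ^ d + lam) lam
    simp only [add_sub_cancel_right] at h0
    rw [ha, Z_succ]
    calc b = ‖z ^ d‖ := by rw [norm_pow]
      _ ≤ ‖z ^ d + lam‖ + c := h0
  have e1 : H d lam (n + 1) = Real.log (max 1 a) := by rw [H, ha]
  have h1 := logplus_le hc0 hab
  have h2 := logplus_le hc0 hba
  rw [abs_le, e1, hkey]
  constructor <;> linarith

lemma abs_G_step (d : ℕ) (hd : 1 < d) (lam : ℂ) (n : ℕ) :
    |G d lam (n + 1) - G d lam n| ≤ Real.log (1 + ‖lam‖) / (d : ℝ) ^ (n + 1) := by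
  have hd0 : (0 : ℝ) < d := by exact_mod_cast Nat.zero_lt_of_lt hd
  have hp : (0 : ℝ) < (d : ℝ) ^ (n + 1) := pow_pos hd0 _
  have heq : G d lam (n + 1) - G d lam n =
      (H d lam (n + 1) - (d : ℝ) * H d lam n) / (d : ℝ) ^ (n + 1) := by
    rw [G, G]
    field_simp
    ring
  rw [heq, abs_div, abs_of_pos hp]
  gcongr
  exact abs_H_step d lam n


lemma G_cauchy (d : ℕ) (hd : 1 < d) (lam : ℂ) : CauchySeq (fun n => G d lam n) := by
  have hd2 : (2:ℝ) ≤ d := by exact_mod_cast hd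
  have hd0 : (0:ℝ) < d := by linarith
  set c := Real.log (1 + ‖lam‖) with hc
  have hr : 1/(d:ℝ) < 1 := by rw [div_lt_one hd0]; linarith
  apply cauchySeq_of_le_geometric (1/(d:ℝ)) (c/d) hr
  intro k
  rw [Real.dist_eq, abs_sub_comm]
  calc |G d lam (k+1) - G d lam k| ≤ c / (d:ℝ)^(k+1) := abs_G_step d hd lam k
    _ = (c/d) * (1/(d:ℝ))^k := by
        rw [div_pow, one_pow, pow_succ]
        rw [div_mul_eq_div_div, div_mul_eq_mul_div, mul_one_div, div_div]

lemma dist_G_limit (d : ℕ) (hd : 1 < d) (lam : ℂ) {L : ℝ}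
    (hL : Tendsto (fun n => G d lam n) atTop (𝓝 L)) (n : ℕ) :
    dist (G d lam n) L ≤ Real.log (1 + ‖lam‖) / (d:ℝ)^n := by
  have hd2 : (2:ℝ) ≤ d := by exact_mod_cast hd
  have hd0 : (0:ℝ) < d := by linarith
  set c := Real.log (1 + ‖lam‖) with hc
  have hc0 : 0 ≤ c := Real.log_nonneg (by linarith [norm_nonneg lam])
  have hr : 1/(d:ℝ) < 1 := by rw [div_lt_one hd0]; linarith
  have hu : ∀ k, dist (G d lam k) (G d lam (k+1)) ≤ (c/d) * (1/(d:ℝ))^k := by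
    intro k
    rw [Real.dist_eq, abs_sub_comm]
    calc |G d lam (k+1) - G d lam k| ≤ c / (d:ℝ)^(k+1) := abs_G_step d hd lam k
      _ = (c/d) * (1/(d:ℝ))^k := by
          rw [div_pow, one_pow, pow_succ]
          rw [div_mul_eq_div_div, div_mul_eq_mul_div, mul_one_div, div_div]
  have hb := dist_le_of_le_geometric_of_tendsto (1/(d:ℝ)) (c/d) hr hu hL n
  have hpn : (0:ℝ) < (d:ℝ)^n := pow_pos hd0 n
  calc dist (G d lam n) L ≤ (c/d) * (1/(d:ℝ))^n / (1 - 1/(d:ℝ)) := hb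
    _ = c / ((d:ℝ)^n * ((d:ℝ)-1)) := by
        have hne : (d:ℝ) ≠ 0 := by linarith
        have hne1 : (d:ℝ) - 1 ≠ 0 := by linarith
        have hpn : ((d:ℝ)^n) ≠ 0 := by positivity
        rw [div_pow, one_pow]
        field_simp
    _ ≤ c / (d:ℝ)^n := by
        exact div_le_div_of_nonneg_left hc0 hpn (by nlinarith)


lemma abs_pow_add_lower (d : ℕ) (w lam : ℂ) :
    (‖w‖) ^ d - ‖lam‖ ≤ ‖w ^ d + lam‖ := by
  have h0 := norm_sub_le (w ^ d + lam) lam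
  simp only [add_sub_cancel_right] at h0
  rw [norm_pow] at h0
  linarith

lemma pos_limit_of_unbounded (d : ℕ) (hd : 1 < d) (lam : ℂ) {L : ℝ}
    (hL : Tendsto (fun n => G d lam n) atTop (𝓝 L))
    (hub : ∀ M : ℝ, ∃ n, M < ‖Z d lam n‖) : 0 < L := by
  have hd2 : (2 : ℝ) ≤ d := by exact_mod_cast hd
  have hd0 : (0 : ℝ) < d := by linarith
  have hdnat : 2 ≤ d := hd
  have clam : 0 ≤ ‖lam‖ := norm_nonneg _
  have hlog2 : (0 : ℝ) ≤ Real.log 2 := Real.log_nonneg one_le_two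
  obtain ⟨n, hn⟩ := hub (‖lam‖ + 2)
  have grow : ∀ k : ℕ, ‖lam‖ + 2 + 2 * (k : ℝ) ≤ ‖Z d lam (n + k)‖ := by
    intro k
    induction k with
    | zero => simpa using hn.le
    | succ k ih =>
      set w := Z d lam (n + k) with hw
      have hkc : (0 : ℝ) ≤ (k : ℝ) := Nat.cast_nonneg k
      have hw2 : 2 ≤ ‖w‖ := by linarith
      have hw1 : 1 ≤ ‖w‖ := by linarith
      have hpow : (‖w‖) ^ 2 ≤ (‖w‖) ^ d := pow_le_pow_right₀ hw1 hdnat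
      have hZ : Z d lam (n + (k + 1)) = w ^ d + lam := by
        rw [show n + (k + 1) = (n + k) + 1 from rfl, Z_succ]
      have hlow := abs_pow_add_lower d w lam
      rw [hZ]
      have h2w : 2 * ‖w‖ ≤ (‖w‖) ^ 2 := by nlinarith
      push_cast
      nlinarith
  set m := n + 1 with hm
  have hZm : ∀ k : ℕ, ‖lam‖ + 4 + 2 * (k : ℝ) ≤ ‖Z d lam (m + k)‖ := by
    intro k
    have := grow (k + 1)
    rw [show n + (k + 1) = m + k by omega] at this
    push_cast at this
    linarith
  have hstep : ∀ k : ℕ, (d : ℝ) * H d lam (m + k) - Real.log 2 ≤ H d lam (m + k + 1) := by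
    intro k
    set r := ‖Z d lam (m + k)‖ with hrdef
    have hkc : (0 : ℝ) ≤ (k : ℝ) := Nat.cast_nonneg k
    have hr4 : 4 ≤ r := by have := hZm k; linarith
    have hrlam : ‖lam‖ + 2 ≤ r := by have := hZm k; linarith
    have hr1 : (1 : ℝ) ≤ r := by linarith
    have hpow2 : r ^ 2 ≤ r ^ d := pow_le_pow_right₀ hr1 hdnat
    have hZ : Z d lam (m + k + 1) = (Z d lam (m + k)) ^ d + lam := Z_succ d lam (m + k)
    have hlow : r ^ d - ‖lam‖ ≤ ‖Z d lam (m + k + 1)‖ := by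
      rw [hZ]; exact abs_pow_add_lower d _ lam
    have hhalf : r ^ d / 2 ≤ ‖Z d lam (m + k + 1)‖ := by nlinarith
    have hZ1 : (2 : ℝ) ≤ ‖Z d lam (m + k + 1)‖ := by nlinarith
    have hH1 : H d lam (m + k) = Real.log r := by
      rw [H, ← hrdef, max_eq_right hr1]
    have hH2 : H d lam (m + k + 1) = Real.log (‖Z d lam (m + k + 1)‖) := by
      rw [H, max_eq_right (by linarith)]
    rw [hH1, hH2]
    have hlog : Real.log (r ^ d / 2) ≤ Real.log (‖Z d lam (m + k + 1)‖) :=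
      Real.log_le_log (by positivity) hhalf
    rw [Real.log_div (by positivity) two_ne_zero, Real.log_pow] at hlog
    linarith
  have hGstep : ∀ k : ℕ, G d lam (m + k) - Real.log 2 / (d : ℝ) ^ (m + k + 1) ≤
      G d lam (m + k + 1) := by
    intro k
    have h := hstep k
    have hp : (0 : ℝ) < (d : ℝ) ^ (m + k + 1) := pow_pos hd0 _
    have hq : ((d : ℝ) ^ (m + k)) ≠ 0 := by positivity
    have hdu : (d : ℝ) ≠ 0 := by linarith
    have e : G d lam (m + k) - Real.log 2 / (d : ℝ) ^ (m + k + 1) =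
        ((d : ℝ) * H d lam (m + k) - Real.log 2) / (d : ℝ) ^ (m + k + 1) := by
      rw [G, sub_div, pow_succ]
      field_simp
    rw [e, G]
    gcongr
  have tail : ∀ k : ℕ, G d lam m - Real.log 2 * (1 / (d : ℝ) ^ m - 1 / (d : ℝ) ^ (m + k)) ≤
      G d lam (m + k) := by
    intro k
    induction k with
    | zero => simp
    | succ k ih =>
      have hp : (0 : ℝ) < (d : ℝ) ^ (m + k) := pow_pos hd0 _
      have h2 : 2 * (1 / (d : ℝ) ^ (m + k + 1)) ≤ 1 / (d : ℝ) ^ (m + k) := by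
        rw [pow_succ]
        have h3 : 1 / ((d : ℝ) ^ (m + k) * d) ≤ 1 / ((d : ℝ) ^ (m + k) * 2) :=
          one_div_le_one_div_of_le (by positivity) (by nlinarith)
        calc 2 * (1 / ((d : ℝ) ^ (m + k) * d)) ≤ 2 * (1 / ((d : ℝ) ^ (m + k) * 2)) := by
              linarith
          _ = 1 / (d : ℝ) ^ (m + k) := by
              rw [mul_one_div, mul_comm ((d : ℝ) ^ (m + k)) 2, ← div_div]
              ring
      have hmul := mul_le_mul_of_nonneg_left h2 hlog2
      have hs := hGstep k
      rw [div_eq_mul_one_div] at hs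
      rw [show m + (k + 1) = m + k + 1 from rfl]
      linarith
  have hGm : Real.log 4 / (d : ℝ) ^ m ≤ G d lam m := by
    have h4 : (4 : ℝ) ≤ ‖Z d lam m‖ := by
      have := hZm 0
      simp only [Nat.cast_zero] at this
      rw [show m + 0 = m from rfl] at this
      linarith
    have : Real.log 4 ≤ H d lam m := by
      rw [H]
      exact Real.log_le_log (by norm_num) (le_trans h4 (le_max_right _ _))
    rw [G]
    gcongr
  have hLB : G d lam m - Real.log 2 / (d : ℝ) ^ m ≤ L := by
    apply ge_of_tendsto (hL.comp (tendsto_add_atTop_nat m))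
    apply Filter.Eventually.of_forall
    intro k
    have ht := tail k
    have hp : (0 : ℝ) < (d : ℝ) ^ (m + k) := pow_pos hd0 _
    have hp0 : (0 : ℝ) ≤ 1 / (d : ℝ) ^ (m + k) := by positivity
    have hmul : Real.log 2 * (1 / (d : ℝ) ^ m - 1 / (d : ℝ) ^ (m + k)) ≤
        Real.log 2 * (1 / (d : ℝ) ^ m) := by nlinarith
    have : G d lam m - Real.log 2 * (1 / (d : ℝ) ^ m) ≤ G d lam (m + k) := by linarith
    simpa [Function.comp, add_comm, mul_one_div, div_eq_mul_inv] using this.trans_eq rfl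
  have h42 : Real.log 4 = 2 * Real.log 2 := by
    rw [show (4 : ℝ) = 2 ^ 2 by norm_num, Real.log_pow]
    push_cast
    ring
  have hpm : (0 : ℝ) < (d : ℝ) ^ m := pow_pos hd0 m
  have e4 : Real.log 4 / (d : ℝ) ^ m = 2 * (Real.log 2 / (d : ℝ) ^ m) := by
    rw [h42]; ring
  have hl2 : 0 < Real.log 2 / (d : ℝ) ^ m := div_pos (Real.log_pos (by norm_num)) hpm
  linarith

end Stmt17Aux

open Stmt17Aux Topology

theorem stmt17 (d : ℕ) (hd : 1 < d) :
    ∃ g : ℂ → ℝ,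
      TendstoLocallyUniformly
        (fun (n : ℕ) (lam : ℂ) =>
          Real.log (max 1 (‖(uniIter d lam n).eval lam‖)) / (d : ℝ) ^ n)
        g atTop ∧
      Continuous g ∧
      (∀ lam : ℂ, 0 ≤ g lam) ∧
      {lam : ℂ | g lam = 0} =
        {lam : ℂ | ∃ M : ℝ, ∀ n : ℕ, ‖(uniIter d lam n).eval lam‖ ≤ M} := by
  classical
  have hd2 : (2 : ℝ) ≤ d := by exact_mod_cast hd
  have hd0 : (0 : ℝ) < d := by linarith
  have hT : ∀ lam : ℂ, ∃ L, Tendsto (fun n => G d lam n) atTop (𝓝 L) := fun lam =>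
    cauchySeq_tendsto_of_complete (G_cauchy d hd lam)
  choose g hg using hT
  have hdist : ∀ (lam : ℂ) (n : ℕ),
      dist (G d lam n) (g lam) ≤ Real.log (1 + ‖lam‖) / (d : ℝ) ^ n :=
    fun lam n => dist_G_limit d hd lam (hg lam) n
  have hGnonneg : ∀ (lam : ℂ) (n : ℕ), 0 ≤ G d lam n := fun lam n =>
    div_nonneg (H_nonneg d lam n) (by positivity)
  have hTLU : TendstoLocallyUniformly (fun n lam => G d lam n) g atTop := by
    rw [Metric.tendstoLocallyUniformly_iff]
    intro ε hε x
    refine ⟨Metric.closedBall x 1, Metric.closedBall_mem_nhds x one_pos, ?_⟩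
    set C := Real.log (2 + ‖x‖) with hC
    have hC0 : 0 ≤ C := Real.log_nonneg (by linarith [norm_nonneg x])
    have htend : Tendsto (fun n : ℕ => C * (1 / (d : ℝ)) ^ n) atTop (𝓝 0) := by
      have h1 := tendsto_pow_atTop_nhds_zero_of_lt_one
        (by positivity : (0:ℝ) ≤ 1 / (d:ℝ)) (by rw [div_lt_one hd0]; linarith)
      simpa using h1.const_mul C
    have hev : ∀ᶠ n : ℕ in atTop, C * (1 / (d : ℝ)) ^ n < ε := htend.eventually (gt_mem_nhds hε)
    filter_upwards [hev] with n hn y hy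
    have hyx : ‖y - x‖ ≤ 1 := by
      rw [Metric.mem_closedBall, Complex.dist_eq] at hy
      exact hy
    have hyb : ‖y‖ ≤ ‖x‖ + 1 := by
      calc ‖y‖ = ‖x + (y - x)‖ := by ring_nf
        _ ≤ ‖x‖ + ‖y - x‖ := norm_add_le _ _
        _ ≤ ‖x‖ + 1 := by linarith
    have hcy : Real.log (1 + ‖y‖) ≤ C := by
      rw [hC]
      exact Real.log_le_log (by positivity) (by linarith)
    have h1 := hdist y n
    rw [dist_comm] at h1
    calc dist (g y) (G d y n) ≤ Real.log (1 + ‖y‖) / (d : ℝ) ^ n := h1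
      _ ≤ C / (d : ℝ) ^ n := by gcongr
      _ = C * (1 / (d : ℝ)) ^ n := by rw [div_pow, one_pow, mul_one_div]
      _ < ε := hn
  have hZcont : ∀ k : ℕ, Continuous fun lam : ℂ => Z d lam k := by
    intro k
    induction k with
    | zero => simp only [Z_zero]; exact continuous_id
    | succ k ih => simp only [Z_succ]; exact (ih.pow d).add continuous_id
  have hFcont : ∀ n : ℕ, Continuous fun lam => G d lam n := by
    intro n
    apply Continuous.div_const
    apply Continuous.log
    · exact continuous_const.max (continuous_norm.comp (hZcont n))
    · intro x
      exact (lt_of_lt_of_le one_pos (le_max_left _ _)).ne'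
  refine ⟨g, hTLU, hTLU.continuous (Filter.Eventually.of_forall hFcont).frequently, ?_, ?_⟩
  · intro lam
    exact ge_of_tendsto (hg lam) (Filter.Eventually.of_forall fun n => hGnonneg lam n)
  · ext lam
    simp only [Set.mem_setOf_eq]
    constructor
    · intro h0
      by_contra hub
      push_neg at hub
      have hpos := pos_limit_of_unbounded d hd lam (hg lam) hub
      rw [h0] at hpos
      exact lt_irrefl 0 hpos
    · rintro ⟨M, hM⟩
      have hb : ∀ n : ℕ, G d lam n ≤ Real.log (max 1 M) / (d : ℝ) ^ n := by
        intro n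
        have h1 : max 1 (‖Z d lam n‖) ≤ max 1 M := max_le_max le_rfl (hM n)
        have h2 : H d lam n ≤ Real.log (max 1 M) := by
          rw [H]
          exact Real.log_le_log (lt_of_lt_of_le one_pos (le_max_left _ _)) h1
        rw [G]
        gcongr
      have hzero : Tendsto (fun n => G d lam n) atTop (𝓝 0) := by
        apply squeeze_zero (fun n => hGnonneg lam n) hb
        have h1 := tendsto_pow_atTop_nhds_zero_of_lt_one
          (by positivity : (0:ℝ) ≤ 1 / (d:ℝ)) (by rw [div_lt_one hd0]; linarith)
        have h2 := h1.const_mul (Real.log (max 1 M))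
        simp only [mul_zero] at h2
        convert h2 using 2 with n
        rw [div_pow, one_pow, mul_one_div]
      exact tendsto_nhds_unique (hg lam) hzero
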